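/- arXiv:2206.03097 — 2 statements merged into one kernel-verified Lean document; each statement's English description precedes it below -/
import Mathlib

section
/- For any sequence s of length n, there exist n sequences t¹,…,tⁿ, where tⁱ is obtained from s by a single substitution at position i, such that edit(tⁱ,tʲ) ≥ 2 for all i ≠ j. -/
/-- The cost structure of Mathlib's former `Mathlib.Data.List.EditDistance.Defs`. -/
structure Levenshtein.Cost (α β δ : Type*) where
  delete : α → δ
  insert : β → δ
  substitute : α → β → δ

/-- Unit costs, as in Mathlib's former `Levenshtein.defaultCost`. -/
def Levenshtein.defaultCost {α : Type*} [DecidableEq α] : Levenshtein.Cost α α ℕ where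
  delete _ := 1
  insert _ := 1
  substitute a b := if a = b then 0 else 1

/-- One step of the dynamic program, as in Mathlib's former `Levenshtein.impl`. -/
def Levenshtein.impl {α β δ : Type*} [AddZeroClass δ] [Min δ] (C : Levenshtein.Cost α β δ)
    (xs : List α) (y : β) (d : {r : List δ // 0 < r.length}) :
    {r : List δ // 0 < r.length} :=
  let ⟨ds, w⟩ := d
  xs.zip (ds.zip ds.tail) |>.foldr
    (init := ⟨[C.insert y + ds.getLast (List.ne_nil_of_length_pos w)], by simp⟩)
    (fun ⟨x, d₀, d₁⟩ ⟨r, w⟩ =>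
      ⟨min (C.delete x + r[0]) (min (C.insert y + d₀) (C.substitute x y + d₁)) :: r, by simp⟩)

/-- Mathlib's former `suffixLevenshtein`. -/
def suffixLevenshtein {α β δ : Type*} [AddZeroClass δ] [Min δ] (C : Levenshtein.Cost α β δ)
    (xs : List α) (ys : List β) : {r : List δ // 0 < r.length} :=
  ys.foldr
    (Levenshtein.impl C xs)
    (xs.foldr (init := ⟨[0], by simp⟩) (fun a ⟨r, w⟩ => ⟨(C.delete a + r[0]) :: r, by simp⟩))

/-- Mathlib's former `levenshtein`. -/
def levenshtein {α β δ : Type*} [AddZeroClass δ] [Min δ] (C : Levenshtein.Cost α β δ)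
    (xs : List α) (ys : List β) : δ :=
  let ⟨r, w⟩ := suffixLevenshtein C xs ys
  r[0]

namespace Levenshtein

@[simp]
theorem defaultCost_delete {α : Type*} [DecidableEq α] (a : α) :
    (defaultCost : Cost α α ℕ).delete a = 1 := rfl

@[simp]
theorem defaultCost_insert {α : Type*} [DecidableEq α] (a : α) :
    (defaultCost : Cost α α ℕ).insert a = 1 := rfl

@[simp]
theorem defaultCost_substitute {α : Type*} [DecidableEq α] (a b : α) :
    (defaultCost : Cost α α ℕ).substitute a b = if a = b then 0 else 1 := rfl

theorem impl_cons {α β δ : Type*} [AddZeroClass δ] [Min δ] {C : Cost α β δ}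
    (x : α) (xs : List α) (y : β) (d : δ) (ds : List δ) (w : 0 < (d :: ds).length)
    (w' : 0 < List.length ds) :
    impl C (x :: xs) y ⟨d :: ds, w⟩ =
      let ⟨r, w⟩ := impl C xs y ⟨ds, w'⟩
      ⟨min (C.delete x + r[0]) (min (C.insert y + d) (C.substitute x y + ds[0])) :: r, by simp⟩ :=
  match ds, w' with | _ :: _, _ => rfl

theorem impl_cons_fst_zero {α β δ : Type*} [AddZeroClass δ] [Min δ] {C : Cost α β δ}
    (x : α) (xs : List α) (y : β) (d : δ) (ds : List δ) (w : 0 < (d :: ds).length)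
    (h) (w' : 0 < List.length ds) :
    (impl C (x :: xs) y ⟨d :: ds, w⟩).1[0]'h =
      let ⟨r, w⟩ := impl C xs y ⟨ds, w'⟩
      min (C.delete x + r[0]) (min (C.insert y + d) (C.substitute x y + ds[0])) :=
  match ds, w' with | _ :: _, _ => rfl

theorem impl_length {α β δ : Type*} [AddZeroClass δ] [Min δ] {C : Cost α β δ}
    (xs : List α) (y : β)
    (d : {r : List δ // 0 < r.length}) (w : d.1.length = xs.length + 1) :
    (impl C xs y d).1.length = xs.length + 1 := by
  induction xs generalizing d with
  | nil => rfl
  | cons x xs ih =>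
    dsimp [impl]
    match d, w with
    | ⟨d₁ :: d₂ :: ds, _⟩, w =>
      dsimp
      congr 1
      exact ih ⟨d₂ :: ds, (by simp)⟩ (by simpa using w)

end Levenshtein

open Levenshtein in
theorem suffixLevenshtein_length {α β δ : Type*} [AddZeroClass δ] [Min δ] (C : Cost α β δ)
    (xs : List α) (ys : List β) :
    (suffixLevenshtein C xs ys).1.length = xs.length + 1 := by
  induction ys with
  | nil =>
    dsimp [suffixLevenshtein]
    induction xs with
    | nil => rfl
    | cons _ xs ih =>
      simp_all
  | cons y ys ih =>
    dsimp [suffixLevenshtein]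
    rw [impl_length]
    exact ih

theorem suffixLevenshtein_cons₂ {α β δ : Type*} [AddZeroClass δ] [Min δ]
    (C : Levenshtein.Cost α β δ) (xs : List α) (y : β) (ys : List β) :
    suffixLevenshtein C xs (y :: ys) = (Levenshtein.impl C xs) y (suffixLevenshtein C xs ys) :=
  rfl

theorem suffixLevenshtein_cons₁_aux {α : Type*} {x y : {r : List α // 0 < r.length}}
    (w₀ : x.1[0]'x.2 = y.1[0]'y.2) (w : x.1.tail = y.1.tail) : x = y := by
  match x, y with
  | ⟨hx :: tx, _⟩, ⟨hy :: ty, _⟩ => simp_all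

theorem suffixLevenshtein_cons₁ {α β δ : Type*} [AddZeroClass δ] [Min δ]
    (C : Levenshtein.Cost α β δ) (x : α) (xs : List α) (ys : List β) :
    suffixLevenshtein C (x :: xs) ys =
      ⟨levenshtein C (x :: xs) ys ::
        (suffixLevenshtein C xs ys).1, by simp⟩ := by
  induction ys with
  | nil =>
    dsimp [levenshtein, suffixLevenshtein]
    rfl
  | cons y ys ih =>
    apply suffixLevenshtein_cons₁_aux
    · rfl
    · rw [suffixLevenshtein_cons₂ C (x :: xs), ih, Levenshtein.impl_cons]
      · rfl
      · simp [suffixLevenshtein_length]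

theorem suffixLevenshtein_cons_cons_fst_get_zero {α β δ : Type*} [AddZeroClass δ] [Min δ]
    (C : Levenshtein.Cost α β δ) (x : α) (xs : List α) (y : β) (ys : List β) (w) :
    (suffixLevenshtein C (x :: xs) (y :: ys)).1[0]'w =
      let ⟨dx, _⟩ := suffixLevenshtein C xs (y :: ys)
      let ⟨dy, _⟩ := suffixLevenshtein C (x :: xs) ys
      let ⟨dxy, _⟩ := suffixLevenshtein C xs ys
      min
        (C.delete x + dx[0])
        (min
          (C.insert y + dy[0])
          (C.substitute x y + dxy[0])) := by
  conv =>
    lhs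
    dsimp only [suffixLevenshtein_cons₂]
  simp only [suffixLevenshtein_cons₁]
  rw [Levenshtein.impl_cons_fst_zero]
  rfl

theorem levenshtein_nil_cons {α β δ : Type*} [AddZeroClass δ] [Min δ]
    (C : Levenshtein.Cost α β δ) (y : β) (ys : List β) :
    levenshtein C [] (y :: ys) = C.insert y + levenshtein C [] ys := by
  have hl := suffixLevenshtein_length C [] ys
  have hl' := suffixLevenshtein_length C [] (y :: ys)
  simp only [List.length_nil, zero_add] at hl hl'
  show (suffixLevenshtein C [] (y :: ys)).1[0]'(by omega) = _
  have key : ∀ d : {r : List δ // 0 < r.length}, d.1.length = 1 →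
      ∀ hh, (Levenshtein.impl C [] y d).1[0]'hh = C.insert y + d.1[0]'d.2 := by
    rintro ⟨r, w⟩ h hh
    rcases r with _ | ⟨a, _ | ⟨b, r⟩⟩
    · simp at h
    · rfl
    · simp at h
  exact key _ hl _

theorem levenshtein_cons_nil {α β δ : Type*} [AddZeroClass δ] [Min δ]
    (C : Levenshtein.Cost α β δ) (x : α) (xs : List α) :
    levenshtein C (x :: xs) ([] : List β) = C.delete x + levenshtein C xs [] :=
  rfl

theorem levenshtein_cons_cons {α β δ : Type*} [AddZeroClass δ] [Min δ]
    (C : Levenshtein.Cost α β δ) (x : α) (xs : List α) (y : β) (ys : List β) :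
    levenshtein C (x :: xs) (y :: ys) =
      min (C.delete x + levenshtein C xs (y :: ys))
        (min (C.insert y + levenshtein C (x :: xs) ys)
          (C.substitute x y + levenshtein C xs ys)) :=
  suffixLevenshtein_cons_cons_fst_get_zero ..

/-- Edit (Levenshtein) distance between two length-`n` sequences over `α`. -/
def editDist {α : Type*} [DecidableEq α] {n : ℕ} (s t : Fin n → α) : ℕ :=
  levenshtein Levenshtein.defaultCost (List.ofFn s) (List.ofFn t)

/-- `f` is a `(d₁, d₂)`-sensitive bucketing function. -/
def IsSensitive {α B : Type*} [DecidableEq α] {n : ℕ} (d₁ d₂ : ℕ)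
    (f : (Fin n → α) → Set B) : Prop :=
  (∀ s t : Fin n → α, editDist s t ≤ d₁ → (f s ∩ f t).Nonempty) ∧
  (∀ s t : Fin n → α, d₂ ≤ editDist s t → f s ∩ f t = ∅)

private lemma lev_eq_zero {α : Type*} [DecidableEq α] :
    ∀ xs ys : List α, levenshtein Levenshtein.defaultCost xs ys = 0 → xs = ys := by
  intro xs
  induction xs with
  | nil =>
    intro ys h
    cases ys with
    | nil => rfl
    | cons y ys => simp [levenshtein_nil_cons] at h
  | cons x xs ih =>
    intro ys h
    cases ys with
    | nil => simp [levenshtein_cons_nil] at h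
    | cons y ys =>
      simp only [levenshtein_cons_cons, Levenshtein.defaultCost_delete,
        Levenshtein.defaultCost_insert, Levenshtein.defaultCost_substitute,
        Nat.min_eq_zero_iff, Nat.add_eq_zero] at h
      rcases h with ⟨h, _⟩ | ⟨⟨h, _⟩ | ⟨h1, h2⟩⟩
      · exact absurd h one_ne_zero
      · exact absurd h one_ne_zero
      · have hxy : x = y := by by_contra hne; simp [hne] at h1
        rw [hxy, ih ys h2]

private lemma one_le_lev {α : Type*} [DecidableEq α] {xs ys : List α} (h : xs ≠ ys) :
    1 ≤ levenshtein Levenshtein.defaultCost xs ys :=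
  Nat.one_le_iff_ne_zero.mpr (fun h0 => h (lev_eq_zero xs ys h0))

private lemma two_le_lev {α : Type*} [DecidableEq α] :
    ∀ (xs ys : List α) (i j : ℕ) (hlen : xs.length = ys.length) (hij : i < j)
      (hj : j < xs.length),
      xs[i]'(lt_trans hij hj) ≠ ys[i]'(by omega) →
      xs[j] ≠ ys[j]'(by omega) →
      2 ≤ levenshtein Levenshtein.defaultCost xs ys := by
  intro xs
  induction xs with
  | nil => intro ys i j _ _ hj; simp at hj
  | cons x xs ih =>
    intro ys i j hlen hij hj hi' hj'
    cases ys with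
    | nil => simp at hlen
    | cons y ys =>
      simp only [List.length_cons, Nat.succ_inj] at hlen
      obtain ⟨j', rfl⟩ : ∃ j', j = j' + 1 := ⟨j - 1, by omega⟩
      have hj'lt : j' < xs.length := by
        simp only [List.length_cons] at hj; omega
      simp only [List.getElem_cons_succ] at hj'
      have hne1 : xs ≠ y :: ys := by
        intro h; apply_fun List.length at h; simp [hlen] at h
      have hne2 : x :: xs ≠ ys := by
        intro h; apply_fun List.length at h; simp [hlen] at h
      have key : 2 ≤ Levenshtein.defaultCost.substitute x y +
          levenshtein Levenshtein.defaultCost xs ys := by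
        rcases Nat.eq_zero_or_pos i with hi0 | hi0
        · subst hi0
          have hxy : x ≠ y := by simpa using hi'
          have hne : xs ≠ ys := fun h => hj' (by subst h; rfl)
          have h1 := one_le_lev hne
          simp only [Levenshtein.defaultCost_substitute, if_neg hxy]
          omega
        · obtain ⟨i', rfl⟩ : ∃ i', i = i' + 1 := ⟨i - 1, by omega⟩
          simp only [List.getElem_cons_succ] at hi'
          by_cases hxy : x = y
          · have := ih ys i' j' hlen (by omega) hj'lt hi' hj'
            simp only [Levenshtein.defaultCost_substitute, if_pos hxy]
            omega
          · have hne : xs ≠ ys := fun h => hi' (by subst h; rfl)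
            have h1 := one_le_lev hne
            simp only [Levenshtein.defaultCost_substitute, if_neg hxy]
            omega
      rw [levenshtein_cons_cons]
      have h1 := one_le_lev hne1
      have h2 := one_le_lev hne2
      simp only [Levenshtein.defaultCost_delete, Levenshtein.defaultCost_insert,
        le_min_iff]
      exact ⟨by omega, by omega, key⟩

theorem stmt2 {α : Type*} [Fintype α] [DecidableEq α] (hα : 1 < Fintype.card α)
    {n : ℕ} (s : Fin n → α) :
    ∃ t : Fin n → (Fin n → α),
      (∀ i : Fin n, t i i ≠ s i ∧ t i = Function.update s i (t i i)) ∧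
      (∀ i j : Fin n, i ≠ j → 2 ≤ editDist (t i) (t j)) := by
  have hex : ∀ a : α, ∃ b : α, b ≠ a := fun a =>
    Fintype.exists_ne_of_one_lt_card hα a
  choose a ha using hex
  refine ⟨fun i => Function.update s i (a (s i)), ?_, ?_⟩
  · intro i
    constructor
    · simp [Function.update_self, ha]
    · simp [Function.update_self]
  · intro i j hij
    have hdiff : ∀ k : Fin n,
        (k = i ∨ k = j) → Function.update s i (a (s i)) k ≠ Function.update s j (a (s j)) k := by
      intro k hk
      rcases hk with rfl | rfl
      · rw [Function.update_self, Function.update_of_ne hij]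
        exact ha (s k)
      · rw [Function.update_self, Function.update_of_ne (Ne.symm hij)]
        exact (ha (s k)).symm
    unfold editDist
    rcases lt_or_gt_of_ne (fun h : (i:ℕ) = (j:ℕ) => hij (Fin.ext h)) with h | h
    · refine two_le_lev _ _ i j (by simp) h (by simp) ?_ ?_
      · simpa using hdiff i (Or.inl rfl)
      · simpa using hdiff j (Or.inr rfl)
    · refine two_le_lev _ _ j i (by simp) h (by simp) ?_ ?_
      · simpa using hdiff j (Or.inr rfl)
      · simpa using hdiff i (Or.inl rfl)
end

section
/- If B ⊆ Σⁿ is (1,1)-guaranteed, then for any two sequences s, t ∈ Σⁿ with edit(s,t) = 3, there exists v ∈ B with edit(s,v) ≤ 2 and edit(t,v) ≤ 2; hence the bucketing function f_B^2(s) = N_n^2(s) ∩ B is (3,5)-sensitive. -/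
/-- `B` is a `(d, r)`-guaranteed subset of `Σⁿ`: for every pair of sequences within
edit distance `d`, some sequence of `B` lies in both of their `r`-neighborhoods. -/
def IsGuaranteed {α : Type*} [DecidableEq α] {n : ℕ} (d r : ℕ)
    (B : Set (Fin n → α)) : Prop :=
  ∀ s t : Fin n → α, editDist s t ≤ d →
    ∃ v ∈ B, editDist s v ≤ r ∧ editDist t v ≤ r


@[simp] theorem Levenshtein.defaultCost_delete_s19 {α : Type*} [DecidableEq α] (a : α) :
    Levenshtein.defaultCost.delete a = 1 := rfl
@[simp] theorem Levenshtein.defaultCost_insert_s19 {α : Type*} [DecidableEq α] (a : α) :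
    Levenshtein.defaultCost.insert a = 1 := rfl
theorem Levenshtein.defaultCost_substitute_s19 {α : Type*} [DecidableEq α] (a b : α) :
    Levenshtein.defaultCost.substitute a b = if a = b then 0 else 1 := rfl

namespace Stmt19Aux

section LevBasic
variable {α β δ : Type*} [AddZeroClass δ] [Min δ] {C : Levenshtein.Cost α β δ}

theorem impl_length (xs : List α) (y : β) (d : {r : List δ // 0 < r.length})
    (w : d.1.length = xs.length + 1) :
    (Levenshtein.impl C xs y d).1.length = xs.length + 1 := by
  induction xs generalizing d with
  | nil => rfl
  | cons x xs ih =>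
    dsimp [Levenshtein.impl]
    match d, w with
    | ⟨d₁ :: d₂ :: ds, _⟩, w =>
      dsimp
      congr 1
      exact ih ⟨d₂ :: ds, (by simp)⟩ (by simpa using w)

theorem suffixLevenshtein_length (xs : List α) (ys : List β) :
    (suffixLevenshtein C xs ys).1.length = xs.length + 1 := by
  induction ys with
  | nil =>
    dsimp [suffixLevenshtein]
    induction xs with
    | nil => rfl
    | cons _ xs ih => simp_all
  | cons y ys ih =>
    dsimp [suffixLevenshtein]
    rw [impl_length]
    exact ih

theorem impl_cons (x : α) (xs : List α) (y : β) (d : δ) (ds : List δ) (w) (w' : 0 < ds.length) :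
    Levenshtein.impl C (x :: xs) y ⟨d :: ds, w⟩ =
      let ⟨r, w⟩ := Levenshtein.impl C xs y ⟨ds, w'⟩
      ⟨min (C.delete x + r[0]) (min (C.insert y + d) (C.substitute x y + ds[0])) :: r,
        by simp⟩ :=
  match ds, w' with | _ :: _, _ => rfl

theorem impl_cons_fst_zero (x : α) (xs : List α) (y : β) (d : δ) (ds : List δ) (w h)
    (w' : 0 < ds.length) :
    (Levenshtein.impl C (x :: xs) y ⟨d :: ds, w⟩).1[0]'h =
      min (C.delete x + (Levenshtein.impl C xs y ⟨ds, w'⟩).1[0]'(Levenshtein.impl C xs y ⟨ds, w'⟩).2)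
        (min (C.insert y + d) (C.substitute x y + ds[0])) :=
  match ds, w' with | _ :: _, _ => rfl

theorem suffixLevenshtein_cons₂ (xs : List α) (y : β) (ys : List β) :
    suffixLevenshtein C xs (y :: ys) = Levenshtein.impl C xs y (suffixLevenshtein C xs ys) := rfl

theorem suffixLevenshtein_cons₁_aux {x y : {r : List δ // 0 < r.length}}
    (w₀ : x.1[0]'x.2 = y.1[0]'y.2) (w : x.1.tail = y.1.tail) : x = y := by
  match x, y with
  | ⟨hx :: tx, _⟩, ⟨hy :: ty, _⟩ => simp_all

theorem suffixLevenshtein_cons₁ (x : α) (xs : List α) (ys : List β) :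
    suffixLevenshtein C (x :: xs) ys =
      ⟨levenshtein C (x :: xs) ys :: (suffixLevenshtein C xs ys).1, by simp⟩ := by
  induction ys with
  | nil => rfl
  | cons y ys ih =>
    apply suffixLevenshtein_cons₁_aux
    · rfl
    · rw [suffixLevenshtein_cons₂ (C := C) (x :: xs), ih, impl_cons]
      · rfl
      · simp [suffixLevenshtein_length]

theorem suffixLevenshtein_cons₁_fst (x : α) (xs : List α) (ys : List β) :
    (suffixLevenshtein C (x :: xs) ys).1 =
      levenshtein C (x :: xs) ys :: (suffixLevenshtein C xs ys).1 := by
  rw [suffixLevenshtein_cons₁]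

theorem suffixLevenshtein_fst_zero (xs : List α) (ys : List β) :
    (suffixLevenshtein C xs ys).1[0]'(suffixLevenshtein C xs ys).2 = levenshtein C xs ys := rfl

@[simp] theorem levenshtein_nil_nil : levenshtein C ([] : List α) ([] : List β) = 0 := rfl

theorem levenshtein_cons_nil (x : α) (xs : List α) :
    levenshtein C (x :: xs) ([] : List β) = C.delete x + levenshtein C xs [] := rfl

theorem impl_nil_zero (y : β) (s : {r : List δ // 0 < r.length}) (h : s.1.length = 1) :
    (Levenshtein.impl C ([] : List α) y s).1[0]'(Levenshtein.impl C [] y s).2 = C.insert y + s.1[0]'s.2 := by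
  obtain ⟨r, w⟩ := s
  match r, w, h with
  | [a], _, _ => rfl

theorem levenshtein_nil_cons (y : β) (ys : List β) :
    levenshtein C ([] : List α) (y :: ys) = C.insert y + levenshtein C [] ys :=
  impl_nil_zero y (suffixLevenshtein C [] ys) (suffixLevenshtein_length [] ys)

theorem levenshtein_cons_cons (x : α) (xs : List α) (y : β) (ys : List β) :
    levenshtein C (x :: xs) (y :: ys) =
      min (C.delete x + levenshtein C xs (y :: ys))
        (min (C.insert y + levenshtein C (x :: xs) ys)
          (C.substitute x y + levenshtein C xs ys)) := by
  show (Levenshtein.impl C (x :: xs) y (suffixLevenshtein C (x :: xs) ys)).1[0]'(by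
      rw [impl_length _ y _ (suffixLevenshtein_length _ ys)]; simp) = _
  simp only [suffixLevenshtein_cons₁]
  rw [impl_cons_fst_zero (w' := (suffixLevenshtein C xs ys).2)]
  rfl

end LevBasic
end Stmt19Aux

namespace Stmt19Aux
variable {α : Type*} [DecidableEq α]

abbrev lev (xs ys : List α) : ℕ := levenshtein Levenshtein.defaultCost xs ys

theorem subst_self (x : α) : Levenshtein.defaultCost.substitute x x = 0 := by
  simp [Levenshtein.defaultCost]

theorem subst_le (x y : α) : Levenshtein.defaultCost.substitute x y ≤ 1 := by
  simp [Levenshtein.defaultCost]; split <;> omega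

@[simp] theorem lev_self (xs : List α) : lev xs xs = 0 := by
  induction xs with
  | nil => simp [lev]
  | cons x xs ih =>
    simp only [lev, levenshtein_cons_cons, subst_self, ih] at *
    omega

theorem lev_nil_left (ys : List α) : lev [] ys = ys.length := by
  induction ys with
  | nil => simp [lev]
  | cons y ys ih =>
    simp only [lev, levenshtein_nil_cons, Levenshtein.defaultCost_insert_s19, List.length_cons] at *
    omega

theorem lev_nil_right (xs : List α) : lev xs [] = xs.length := by
  induction xs with
  | nil => simp [lev]
  | cons x xs ih =>
    simp only [lev, levenshtein_cons_nil, Levenshtein.defaultCost_delete_s19, List.length_cons] at *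
    omega

theorem lev_cons_cons (x y : α) (xs ys : List α) :
    lev (x :: xs) (y :: ys) =
      min (1 + lev xs (y :: ys))
        (min (1 + lev (x :: xs) ys)
          (Levenshtein.defaultCost.substitute x y + lev xs ys)) := by
  simp [lev, levenshtein_cons_cons]

/-- delete-head upper bound -/
theorem lev_le_del (x : α) (xs ys : List α) : lev (x :: xs) ys ≤ 1 + lev xs ys := by
  cases ys with
  | nil => rw [lev_nil_right, lev_nil_right]; simp
  | cons y ys => rw [lev_cons_cons]; exact min_le_left _ _

/-- insert-head upper bound -/
theorem lev_le_ins (y : α) (xs ys : List α) : lev xs (y :: ys) ≤ 1 + lev xs ys := by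
  cases xs with
  | nil => rw [lev_nil_left, lev_nil_left]; simp
  | cons x xs =>
    rw [lev_cons_cons]
    exact le_trans (min_le_right _ _) (min_le_left _ _)

/-- substitution upper bound -/
theorem lev_le_sub (x y : α) (xs ys : List α) :
    lev (x :: xs) (y :: ys) ≤ Levenshtein.defaultCost.substitute x y + lev xs ys := by
  rw [lev_cons_cons]
  exact le_trans (min_le_right _ _) (min_le_right _ _)

theorem lev_eq_zero {xs ys : List α} (h : lev xs ys = 0) : xs = ys := by
  induction xs generalizing ys with
  | nil => rw [lev_nil_left] at h; exact (List.length_eq_zero_iff.mp h).symm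
  | cons x xs ih =>
    cases ys with
    | nil => rw [lev_nil_right] at h; simp at h
    | cons y ys =>
      rw [lev_cons_cons] at h
      have h3 : Levenshtein.defaultCost.substitute x y + lev xs ys = 0 := by omega
      have hy : x = y := by
        by_contra hne
        simp [Levenshtein.defaultCost, hne] at h3
      subst hy
      rw [subst_self] at h3
      rw [ih (show lev xs ys = 0 by omega)]

/-- length difference lower bound -/
theorem length_le_lev_add (xs ys : List α) : ys.length ≤ xs.length + lev xs ys := by
  cases xs with
  | nil => rw [lev_nil_left]; omega
  | cons x xs =>
    cases ys with
    | nil => simp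
    | cons y ys =>
      rw [lev_cons_cons]
      have h1 := length_le_lev_add xs (y :: ys)
      have h2 := length_le_lev_add (x :: xs) ys
      have h3 := length_le_lev_add xs ys
      simp only [List.length_cons] at *
      omega
termination_by xs.length + ys.length
decreasing_by all_goals (subst_vars; simp_wf <;> omega)

theorem length_le_lev_add' (xs ys : List α) : xs.length ≤ ys.length + lev xs ys := by
  cases xs with
  | nil => simp
  | cons x xs =>
    cases ys with
    | nil => rw [lev_nil_right]; simp
    | cons y ys =>
      rw [lev_cons_cons]
      have h1 := length_le_lev_add' xs (y :: ys)
      have h2 := length_le_lev_add' (x :: xs) ys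
      have h3 := length_le_lev_add' xs ys
      simp only [List.length_cons] at *
      omega
termination_by xs.length + ys.length
decreasing_by all_goals (subst_vars; simp_wf <;> omega)

theorem subst_symm (x y : α) :
    Levenshtein.defaultCost.substitute x y = Levenshtein.defaultCost.substitute y x := by
  simp only [Levenshtein.defaultCost_substitute_s19]
  by_cases h : x = y
  · simp [h]
  · simp [h, Ne.symm h]

theorem subst_triangle (x y z : α) :
    Levenshtein.defaultCost.substitute x z ≤
      Levenshtein.defaultCost.substitute x y + Levenshtein.defaultCost.substitute y z := by
  simp only [Levenshtein.defaultCost_substitute_s19]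
  split_ifs <;> simp_all

theorem lev_symm (xs ys : List α) : lev xs ys = lev ys xs := by
  cases xs with
  | nil => rw [lev_nil_left, lev_nil_right]
  | cons x xs =>
    cases ys with
    | nil => rw [lev_nil_left, lev_nil_right]
    | cons y ys =>
      rw [lev_cons_cons, lev_cons_cons]
      rw [lev_symm xs (y :: ys), lev_symm (x :: xs) ys, lev_symm xs ys, subst_symm]
      omega
termination_by xs.length + ys.length
decreasing_by all_goals (subst_vars; simp_wf <;> omega)

/-- removing head on the left increases distance by at most 1 -/
theorem lev_tail_left (x : α) (xs ys : List α) : lev xs ys ≤ 1 + lev (x :: xs) ys := by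
  cases ys with
  | nil => rw [lev_nil_right, lev_nil_right]; simp; omega
  | cons z zs =>
    have e := lev_cons_cons x z xs zs
    have i1 := lev_le_ins z xs zs
    have ih := lev_tail_left x xs zs
    omega
termination_by ys.length
decreasing_by all_goals (subst_vars; simp_wf <;> omega)

theorem lev_tail_right (y : α) (xs ys : List α) : lev xs ys ≤ 1 + lev xs (y :: ys) := by
  rw [lev_symm xs ys, lev_symm xs (y :: ys)]
  exact lev_tail_left y ys xs

theorem lev_le_lengths (xs ys : List α) : lev xs ys ≤ xs.length + ys.length := by
  induction xs with
  | nil => rw [lev_nil_left]; omega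
  | cons x xs ih =>
    have := lev_le_del x xs ys
    simp only [List.length_cons]
    omega

theorem lev_triangle (xs ys zs : List α) : lev xs zs ≤ lev xs ys + lev ys zs := by
  cases ys with
  | nil =>
    rw [lev_nil_right, lev_nil_left]
    have := lev_le_lengths xs zs
    omega
  | cons y ys =>
    cases xs with
    | nil =>
      rw [lev_nil_left, lev_nil_left]
      have := length_le_lev_add (y :: ys) zs
      omega
    | cons x xs =>
      cases zs with
      | nil =>
        rw [lev_nil_right, lev_nil_right]
        have := length_le_lev_add' (x :: xs) (y :: ys)
        omega
      | cons z zs =>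
        have e1 := lev_cons_cons x y xs ys
        have e2 := lev_cons_cons y z ys zs
        have d1 := lev_le_del x xs (z :: zs)
        have i3 := lev_le_ins z (x :: xs) zs
        have s3 := lev_le_sub x z xs zs
        have t2 := lev_tail_left y ys (z :: zs)
        have dt := subst_triangle x y z
        have IH1 := lev_triangle xs (y :: ys) (z :: zs)
        have IH2 := lev_triangle (x :: xs) ys (z :: zs)
        have IH3 := lev_triangle xs ys (z :: zs)
        have IH4 := lev_triangle (x :: xs) (y :: ys) zs
        have IH5 := lev_triangle xs ys zs
        omega
termination_by xs.length + ys.length + zs.length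
decreasing_by all_goals (subst_vars; simp_wf <;> omega)


/-- mismatch count of two (equal-length) lists -/
def hamL (A B : List α) : ℕ :=
  (List.zipWith (fun a b => Levenshtein.defaultCost.substitute a b) A B).sum

@[simp] theorem hamL_nil_left (B : List α) : hamL [] B = 0 := rfl

@[simp] theorem hamL_nil_right (A : List α) : hamL A [] = 0 := by
  cases A <;> rfl

@[simp] theorem hamL_cons (a b : α) (A B : List α) :
    hamL (a :: A) (b :: B) = Levenshtein.defaultCost.substitute a b + hamL A B := by
  simp [hamL]

@[simp] theorem hamL_self (A : List α) : hamL A A = 0 := by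
  induction A with
  | nil => rfl
  | cons a A ih => simp [ih, subst_self]

theorem lev_le_hamL {A B : List α} (h : A.length = B.length) : lev A B ≤ hamL A B := by
  induction A generalizing B with
  | nil =>
    cases B with
    | nil => simp
    | cons b B => simp at h
  | cons a A ih =>
    cases B with
    | nil => simp at h
    | cons b B =>
      simp only [List.length_cons] at h
      have := lev_le_sub a b A B
      have := ih (B := B) (by omega)
      simp only [hamL_cons]
      omega

theorem hamL_eq_zero {A B : List α} (h : A.length = B.length) (h0 : hamL A B = 0) : A = B := by
  induction A generalizing B with
  | nil =>
    cases B with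
    | nil => rfl
    | cons b B => simp at h
  | cons a A ih =>
    cases B with
    | nil => simp at h
    | cons b B =>
      simp only [List.length_cons] at h
      simp only [hamL_cons] at h0
      have hab : a = b := by
        by_contra hne
        simp [Levenshtein.defaultCost, hne] at h0
      rw [hab, ih (B := B) (by omega) (by omega)]

theorem hamL_symm (A B : List α) : hamL A B = hamL B A := by
  induction A generalizing B with
  | nil => simp
  | cons a A ih =>
    cases B with
    | nil => simp
    | cons b B => simp only [hamL_cons, ih]; rw [subst_symm]

theorem hamL_triangle {A B C : List α} (h1 : A.length = B.length) (h2 : B.length = C.length) :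
    hamL A C ≤ hamL A B + hamL B C := by
  induction A generalizing B C with
  | nil => simp
  | cons a A ih =>
    cases B with
    | nil => simp at h1
    | cons b B =>
      cases C with
      | nil => simp at h2
      | cons c C =>
        simp only [List.length_cons] at h1 h2
        have := subst_triangle a b c
        have := ih (B := B) (C := C) (by omega) (by omega)
        simp only [hamL_cons]
        omega

@[simp] theorem hamL_append_left (l A B : List α) : hamL (l ++ A) (l ++ B) = hamL A B := by
  induction l with
  | nil => rfl
  | cons x l ih => simp [ih, subst_self]


/-- stripping a common head does not decrease distance -/
theorem lev_strip (a : α) (A B : List α) : lev A B ≤ lev (a :: A) (a :: B) := by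
  have e := lev_cons_cons a a A B
  rw [subst_self] at e
  have t1 := lev_tail_right a A B
  have t2 := lev_tail_left a A B
  omega

theorem lev_append_left_le (l A B : List α) : lev (l ++ A) (l ++ B) ≤ lev A B := by
  induction l with
  | nil => simp
  | cons x l ih =>
    have h := lev_le_sub x x (l ++ A) (l ++ B)
    rw [subst_self] at h
    simp only [List.cons_append]
    omega

/-- equal-length lists at edit distance ≤ 1 differ in at most one position -/
theorem hamL_le_one {A B : List α} (hlen : A.length = B.length) (h : lev A B ≤ 1) :
    hamL A B ≤ 1 := by
  cases A with
  | nil =>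
    cases B with
    | nil => simp
    | cons b B => simp at hlen
  | cons a A =>
    cases B with
    | nil => simp at hlen
    | cons b B =>
      simp only [List.length_cons] at hlen
      have e := lev_cons_cons a b A B
      have hbr : 1 + lev A (b :: B) ≤ 1 ∨ 1 + lev (a :: A) B ≤ 1 ∨
          Levenshtein.defaultCost.substitute a b + lev A B ≤ 1 := by omega
      rcases hbr with hbr | hbr | hbr
      · have h0 := congrArg List.length (lev_eq_zero (show lev A (b :: B) = 0 by omega))
        simp only [List.length_cons] at h0; omega
      · have h0 := congrArg List.length (lev_eq_zero (show lev (a :: A) B = 0 by omega))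
        simp only [List.length_cons] at h0; omega
      · by_cases hab : a = b
        · subst hab
          rw [subst_self] at hbr
          have ihh := hamL_le_one (A := A) (B := B) (by omega) (by omega)
          simp only [hamL_cons, subst_self]
          omega
        · have hd : Levenshtein.defaultCost.substitute a b = 1 := by
            simp [Levenshtein.defaultCost, hab]
          have h0 := lev_eq_zero (show lev A B = 0 by omega)
          subst h0
          simp only [hamL_cons, hamL_self]
          omega
termination_by A.length
decreasing_by all_goals (subst_vars; simp_wf <;> omega)

/-- a list at distance ≤ 1 from a one-longer list is obtained by deleting one element -/
theorem del_char {A B : List α} (hlen : B.length = A.length + 1) (h : lev A B ≤ 1) :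
    ∃ l e r, B = l ++ e :: r ∧ A = l ++ r := by
  cases A with
  | nil =>
    cases B with
    | nil => simp at hlen
    | cons b B =>
      simp only [List.length_cons, List.length_nil] at hlen
      have hB : B = [] := List.length_eq_zero_iff.mp (by omega)
      subst hB
      exact ⟨[], b, [], rfl, rfl⟩
  | cons a A =>
    cases B with
    | nil => simp at hlen
    | cons b B =>
      simp only [List.length_cons] at hlen
      have e := lev_cons_cons a b A B
      have hbr : 1 + lev A (b :: B) ≤ 1 ∨ 1 + lev (a :: A) B ≤ 1 ∨
          Levenshtein.defaultCost.substitute a b + lev A B ≤ 1 := by omega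
      rcases hbr with hbr | hbr | hbr
      · have h0 := congrArg List.length (lev_eq_zero (show lev A (b :: B) = 0 by omega))
        simp only [List.length_cons] at h0; omega
      · have heq := lev_eq_zero (show lev (a :: A) B = 0 by omega)
        exact ⟨[], b, B, rfl, by simp [heq]⟩
      · by_cases hab : a = b
        · subst hab
          rw [subst_self] at hbr
          obtain ⟨l, e', r, hB, hA⟩ := del_char (A := A) (B := B) (by omega) (by omega)
          exact ⟨a :: l, e', r, by simp [hB], by simp [hA]⟩
        · have hd : Levenshtein.defaultCost.substitute a b = 1 := by
            simp [Levenshtein.defaultCost, hab]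
          have h0 := congrArg List.length (lev_eq_zero (show lev A B = 0 by omega))
          omega
termination_by A.length
decreasing_by all_goals (subst_vars; simp_wf <;> omega)

/-- a list at distance ≤ 2 from a one-longer list: delete one element, up to ≤ 1 mismatch -/
theorem del_sub_char {A B : List α} (hlen : B.length = A.length + 1) (h : lev A B ≤ 2) :
    ∃ l e r, B = l ++ e :: r ∧ hamL A (l ++ r) ≤ 1 := by
  cases A with
  | nil =>
    cases B with
    | nil => simp at hlen
    | cons b B =>
      simp only [List.length_cons, List.length_nil] at hlen
      have hB : B = [] := List.length_eq_zero_iff.mp (by omega)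
      subst hB
      exact ⟨[], b, [], rfl, by simp⟩
  | cons a A =>
    cases B with
    | nil => simp at hlen
    | cons b B =>
      simp only [List.length_cons] at hlen
      have e := lev_cons_cons a b A B
      have hbr : 1 + lev A (b :: B) ≤ 2 ∨ 1 + lev (a :: A) B ≤ 2 ∨
          Levenshtein.defaultCost.substitute a b + lev A B ≤ 2 := by omega
      rcases hbr with hbr | hbr | hbr
      · -- deletion from A first: impossible, too little budget for the length gap
        have hL := length_le_lev_add A (b :: B)
        simp only [List.length_cons] at hL
        omega
      · -- insertion of b first: then equal lengths, distance ≤ 1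
        have hh : hamL (a :: A) B ≤ 1 := hamL_le_one (by simp; omega) (by omega)
        exact ⟨[], b, B, rfl, by simpa using hh⟩
      · by_cases hab : a = b
        · subst hab
          rw [subst_self] at hbr
          obtain ⟨l, e', r, hB, hA⟩ := del_sub_char (A := A) (B := B) (by omega) (by omega)
          refine ⟨a :: l, e', r, by simp [hB], ?_⟩
          simpa [subst_self] using hA
        · have hd : Levenshtein.defaultCost.substitute a b = 1 := by
            simp [Levenshtein.defaultCost, hab]
          obtain ⟨l, e', r, hB, hA⟩ := del_char (A := A) (B := B) (by omega) (by omega)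
          refine ⟨b :: l, e', r, by simp [hB], ?_⟩
          simp only [hA, List.cons_append, hamL_cons, hamL_append_left, hamL_self]
          omega
termination_by A.length
decreasing_by all_goals (subst_vars; simp_wf <;> omega)


/-- deleting an inner element and inserting at the front costs at most 2 -/
theorem shift_bound1 (l r : List α) (e c : α) : lev (l ++ e :: r) (c :: (l ++ r)) ≤ 2 := by
  have t1 := lev_triangle (l ++ e :: r) (l ++ r) (c :: (l ++ r))
  have t2 := lev_append_left_le l (e :: r) r
  have t3 := lev_le_del e r r
  have t4 := lev_le_ins c (l ++ r) (l ++ r)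
  have t5 := lev_self r
  have t6 := lev_self (l ++ r)
  omega

/-- deleting the front element and inserting inside costs at most 2 -/
theorem shift_bound2 (l r : List α) (y c : α) : lev (y :: (l ++ r)) (l ++ c :: r) ≤ 2 := by
  have t1 := lev_triangle (y :: (l ++ r)) (l ++ r) (l ++ c :: r)
  have t2 := lev_le_del y (l ++ r) (l ++ r)
  have t3 := lev_append_left_le l r (c :: r)
  have t4 := lev_le_ins c r r
  have t5 := lev_self r
  have t6 := lev_self (l ++ r)
  omega

/-- any equal-length list at distance ≤ 2 admits a position that can be freely resampled -/
theorem mid_decomp {A B : List α} (hlen : A.length = B.length) (h : lev A B ≤ 2)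
    (hne : B ≠ []) :
    ∃ l e r, B = l ++ e :: r ∧ ∀ c, lev A (l ++ c :: r) ≤ 2 := by
  cases A with
  | nil =>
    cases B with
    | nil => exact absurd rfl hne
    | cons x B' => simp at hlen
  | cons y A' =>
    cases B with
    | nil => exact absurd rfl hne
    | cons x B' =>
      simp only [List.length_cons] at hlen
      by_cases hxy : y = x
      · subst hxy
        rcases eq_or_ne A' ([] : List α) with hA' | hA'
        · have hB' : B' = [] := List.length_eq_zero_iff.mp (by subst hA'; simpa using hlen.symm)
          subst hA'; subst hB'
          refine ⟨[], y, [], rfl, fun c => ?_⟩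
          have h1 := lev_le_sub y c ([] : List α) []
          have h2 := subst_le y c
          have h3 : lev ([] : List α) [] = 0 := levenshtein_nil_nil
          simp only [List.nil_append]
          omega
        · have hrec : lev A' B' ≤ 2 := le_trans (lev_strip y A' B') h
          have hB'ne : B' ≠ [] := by
            intro hB0
            subst hB0
            simp only [List.length_nil] at hlen
            exact hA' (List.length_eq_zero_iff.mp (by omega))
          obtain ⟨l, e, r, hB, hbound⟩ :=
            mid_decomp (A := A') (B := B') (by omega) hrec hB'ne
          refine ⟨y :: l, e, r, by simp [hB], fun c => ?_⟩
          have h1 := lev_le_sub y y A' (l ++ c :: r)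
          rw [subst_self] at h1
          have h2 := hbound c
          simp only [List.cons_append]
          omega
      · have e := lev_cons_cons y x A' B'
        have hbr : 1 + lev A' (x :: B') ≤ 2 ∨ 1 + lev (y :: A') B' ≤ 2 ∨
            Levenshtein.defaultCost.substitute y x + lev A' B' ≤ 2 := by omega
        rcases hbr with hbr | hbr | hbr
        · -- delete y from A
          obtain ⟨l, e', r, hB, hA⟩ :=
            del_char (A := A') (B := x :: B') (by simp; omega) (by omega)
          refine ⟨l, e', r, hB, fun c => ?_⟩
          rw [hA]
          exact shift_bound2 l r y c
        · -- insert x into A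
          have hsym : lev B' (y :: A') ≤ 1 := by
            rw [lev_symm]; omega
          obtain ⟨l, e', r, hYA, hB'⟩ :=
            del_char (A := B') (B := y :: A') (by simp; omega) hsym
          refine ⟨[], x, l ++ r, by simp [hB'], fun c => ?_⟩
          rw [hYA]
          simp only [List.nil_append]
          exact shift_bound1 l r e' c
        · -- substitute at the head
          refine ⟨[], x, B', rfl, fun c => ?_⟩
          have h1 := lev_le_sub y c A' B'
          have h2 := subst_le y c
          have hd : Levenshtein.defaultCost.substitute y x = 1 := by
            simp [Levenshtein.defaultCost, hxy]
          simp only [List.nil_append]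
          omega
termination_by A.length
decreasing_by all_goals (subst_vars; simp_wf <;> omega)

/-- key decomposition: equal-length lists at distance ≤ 3 admit a common freely
resamplable position whose every variant is within distance 2 of both lists -/
theorem main_decomp {A B : List α} (hlen : A.length = B.length) (h : lev A B ≤ 3)
    (hne : A ≠ []) :
    ∃ l r, (l ++ r).length + 1 = A.length ∧
      ∀ c, lev A (l ++ c :: r) ≤ 2 ∧ lev B (l ++ c :: r) ≤ 2 := by
  cases A with
  | nil => exact absurd rfl hne
  | cons x A' =>
    cases B with
    | nil => simp at hlen
    | cons y B' =>
      simp only [List.length_cons] at hlen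
      by_cases hxy : x = y
      · subst hxy
        rcases eq_or_ne A' ([] : List α) with hA' | hA'
        · have hB' : B' = [] := List.length_eq_zero_iff.mp (by subst hA'; simpa using hlen.symm)
          subst hA'; subst hB'
          refine ⟨[], [], by simp, fun c => ?_⟩
          have h1 := lev_le_sub x c ([] : List α) []
          have h2 := subst_le x c
          have h3 : lev ([] : List α) [] = 0 := levenshtein_nil_nil
          constructor <;> (simp only [List.nil_append]; omega)
        · have hrec : lev A' B' ≤ 3 := le_trans (lev_strip x A' B') h
          obtain ⟨l, r, hl, hbound⟩ := main_decomp (A := A') (B := B') (by omega) hrec hA'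
          refine ⟨x :: l, r, ?_, fun c => ?_⟩
          · simp only [List.cons_append, List.length_cons] at hl ⊢
            omega
          · obtain ⟨hb1, hb2⟩ := hbound c
            have h1 := lev_le_sub x x A' (l ++ c :: r)
            have h2 := lev_le_sub x x B' (l ++ c :: r)
            rw [subst_self] at h1 h2
            constructor <;> (simp only [List.cons_append]; omega)
      · have e := lev_cons_cons x y A' B'
        have hbr : 1 + lev A' (y :: B') ≤ 3 ∨ 1 + lev (x :: A') B' ≤ 3 ∨
            Levenshtein.defaultCost.substitute x y + lev A' B' ≤ 3 := by omega
        rcases hbr with hbr | hbr | hbr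
        · -- delete x from A, then one substitution somewhere
          obtain ⟨l, e', r, hB, hham⟩ :=
            del_sub_char (A := A') (B := y :: B') (by simp; omega) (by omega)
          have hlr : (l ++ r).length = A'.length := by
            have hh := congrArg List.length hB
            simp only [List.length_cons, List.length_append] at hh ⊢
            omega
          refine ⟨[], l ++ r, ?_, fun c => ⟨?_, ?_⟩⟩
          · simp only [List.nil_append, List.length_cons]
            omega
          · -- A-side via Hamming
            have hle : lev (x :: A') (c :: (l ++ r)) ≤ hamL (x :: A') (c :: (l ++ r)) :=
              lev_le_hamL (by simp only [List.length_cons]; omega)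
            have h2 := subst_le x c
            simp only [hamL_cons] at hle
            simp only [List.nil_append]
            omega
          · -- B-side: delete e', insert c
            rw [hB]
            simp only [List.nil_append]
            exact shift_bound1 l r e' c
        · -- insert y into A, i.e. delete from B, then one substitution somewhere
          have hsym : lev B' (x :: A') ≤ 2 := by rw [lev_symm]; omega
          obtain ⟨l, e', r, hA, hham⟩ :=
            del_sub_char (A := B') (B := x :: A') (by simp; omega) hsym
          have hlr : (l ++ r).length = B'.length := by
            have hh := congrArg List.length hA
            simp only [List.length_cons, List.length_append] at hh ⊢
            omega
          refine ⟨[], l ++ r, ?_, fun c => ⟨?_, ?_⟩⟩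
          · simp only [List.nil_append, List.length_cons]
            omega
          · -- A-side: delete e', insert c
            rw [hA]
            simp only [List.nil_append]
            exact shift_bound1 l r e' c
          · -- B-side via Hamming
            have hle : lev (y :: B') (c :: (l ++ r)) ≤ hamL (y :: B') (c :: (l ++ r)) :=
              lev_le_hamL (by simp only [List.length_cons]; omega)
            have h2 := subst_le y c
            simp only [hamL_cons] at hle
            simp only [List.nil_append]
            omega
        · -- substitution at the head, then distance ≤ 2
          have hd : Levenshtein.defaultCost.substitute x y = 1 := by
            simp [Levenshtein.defaultCost, hxy]
          have hu : lev (y :: B') (y :: A') ≤ 2 := by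
            have h1 := lev_le_sub y y B' A'
            rw [subst_self] at h1
            have h2 : lev B' A' = lev A' B' := lev_symm _ _
            omega
          obtain ⟨l, e', r, hU, hbound⟩ :=
            mid_decomp (A := y :: B') (B := y :: A') (by simp; omega) hu (by simp)
          have hlr : (l ++ r).length + 1 = A'.length + 1 := by
            have hh := congrArg List.length hU
            simp only [List.length_cons, List.length_append] at hh ⊢
            omega
          refine ⟨l, r, ?_, fun c => ⟨?_, hbound c⟩⟩
          · simp only [List.length_cons]
            omega
          · -- A-side via Hamming through y :: A'
            have hlen2 : (y :: A').length = (l ++ c :: r).length := by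
              simp only [List.length_cons, List.length_append] at hlr ⊢
              omega
            have ht := hamL_triangle (A := x :: A') (B := y :: A') (C := l ++ c :: r)
              (by simp) hlen2
            have h1 : hamL (x :: A') (y :: A') ≤ 1 := by
              simp only [hamL_cons, hamL_self, hd]
              omega
            have h2 : hamL (y :: A') (l ++ c :: r) ≤ 1 := by
              rw [hU]
              simp only [hamL_append_left, hamL_cons, hamL_self]
              have := subst_le e' c
              omega
            have hle : lev (x :: A') (l ++ c :: r) ≤ hamL (x :: A') (l ++ c :: r) :=
              lev_le_hamL (by simp only [List.length_cons] at hlen2 ⊢; omega)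
            omega
termination_by A.length
decreasing_by all_goals (subst_vars; simp_wf <;> omega)


/-- a list within Hamming distance 1 of two variants (with distinct letters) at the same
position is itself a variant at that position -/
theorem variant_char {X l r : List α} {e c0 : α} (hne : e ≠ c0)
    (hlen : X.length = (l ++ e :: r).length)
    (h1 : hamL X (l ++ e :: r) ≤ 1) (h2 : hamL X (l ++ c0 :: r) ≤ 1) :
    ∃ d, X = l ++ d :: r := by
  induction l generalizing X with
  | nil =>
    cases X with
    | nil => simp at hlen
    | cons x X' =>
      simp only [List.nil_append, List.length_cons] at hlen h1 h2 ⊢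
      simp only [hamL_cons] at h1 h2
      have h0 : hamL X' r = 0 := by
        by_cases hxe : x = e
        · have : Levenshtein.defaultCost.substitute x c0 = 1 := by
            simp [Levenshtein.defaultCost, hxe ▸ hne]
          omega
        · have : Levenshtein.defaultCost.substitute x e = 1 := by
            simp [Levenshtein.defaultCost, hxe]
          omega
      have : X' = r := hamL_eq_zero (by omega) h0
      exact ⟨x, by rw [this]⟩
  | cons a l' ih =>
    cases X with
    | nil => simp at hlen
    | cons x X' =>
      simp only [List.cons_append, List.length_cons] at hlen h1 h2 ⊢
      simp only [hamL_cons] at h1 h2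
      by_cases hxa : x = a
      · subst hxa
        rw [subst_self] at h1 h2
        obtain ⟨d, hd⟩ := ih (X := X') (by simpa using hlen) (by omega) (by omega)
        exact ⟨d, by rw [hd]⟩
      · have hs : Levenshtein.defaultCost.substitute x a = 1 := by
          simp [Levenshtein.defaultCost, hxa]
        have e1 : X' = l' ++ e :: r := hamL_eq_zero (by simpa using hlen) (by omega)
        have e2 : X' = l' ++ c0 :: r := hamL_eq_zero (by simpa using hlen) (by omega)
        rw [e1] at e2
        have := List.append_cancel_left e2
        simp at this
        exact absurd this hne

omit [DecidableEq α] in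
theorem ofFn_cast {n : ℕ} (L : List α) (hL : L.length = n) :
    List.ofFn (fun i : Fin n => L.get (Fin.cast hL.symm i)) = L := by
  subst hL
  simp


end Stmt19Aux

namespace Stmt19Aux

theorem key {α : Type*} [Fintype α] [DecidableEq α] (hα : 1 < Fintype.card α)
    {n : ℕ} (B : Set (Fin n → α)) (hB : IsGuaranteed 1 1 B) (s t : Fin n → α)
    (h : editDist s t ≤ 3) :
    ∃ v ∈ B, editDist s v ≤ 2 ∧ editDist t v ≤ 2 := by
  rcases Nat.eq_zero_or_pos n with hn | hn
  · -- trivial case `n = 0`: both sequences are equal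
    subst hn
    have hts : t = s := Subsingleton.elim t s
    have h0 : editDist s s = 0 := lev_self (List.ofFn s)
    obtain ⟨v, hvB, hv1, _⟩ := hB s s (by omega)
    exact ⟨v, hvB, by omega, by rw [hts]; omega⟩
  · have hlen : (List.ofFn s).length = (List.ofFn t).length := by simp
    have hne : List.ofFn s ≠ [] := by
      intro h0
      have := congrArg List.length h0
      simp at this
      omega
    obtain ⟨l, r, hl, hbound⟩ :=
      main_decomp (A := List.ofFn s) (B := List.ofFn t) hlen h hne
    simp only [List.length_ofFn, List.length_append] at hl
    have lenc : ∀ c : α, (l ++ c :: r).length = n := by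
      intro c
      simp only [List.length_append, List.length_cons]
      omega
    set P : α → (Fin n → α) := fun c => fun i => (l ++ c :: r).get (Fin.cast (lenc c).symm i)
      with hP
    have hofn : ∀ c, List.ofFn (P c) = l ++ c :: r := fun c => ofFn_cast _ (lenc c)
    obtain ⟨c0, c1, hc01⟩ := Fintype.exists_pair_of_one_lt_card hα
    have h01 : editDist (P c0) (P c1) ≤ 1 := by
      show lev (List.ofFn (P c0)) (List.ofFn (P c1)) ≤ 1
      rw [hofn c0, hofn c1]
      have hham : hamL (l ++ c0 :: r) (l ++ c1 :: r) ≤ 1 := by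
        simp only [hamL_append_left, hamL_cons, hamL_self]
        have := subst_le c0 c1
        omega
      exact le_trans (lev_le_hamL (by simp)) hham
    obtain ⟨v, hvB, hv0, hv1⟩ := hB (P c0) (P c1) h01
    have hh0 : hamL (List.ofFn (P c0)) (List.ofFn v) ≤ 1 := hamL_le_one (by simp) hv0
    have hh1 : hamL (List.ofFn (P c1)) (List.ofFn v) ≤ 1 := hamL_le_one (by simp) hv1
    rw [hofn c0] at hh0
    rw [hofn c1] at hh1
    obtain ⟨d, hvd⟩ := variant_char (X := List.ofFn v) (l := l) (r := r) hc01
      (by simp only [List.length_ofFn, lenc c0])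
      (by rw [hamL_symm]; exact hh0)
      (by rw [hamL_symm]; exact hh1)
    refine ⟨v, hvB, ?_, ?_⟩
    · show lev (List.ofFn s) (List.ofFn v) ≤ 2
      rw [hvd]
      exact (hbound d).1
    · show lev (List.ofFn t) (List.ofFn v) ≤ 2
      rw [hvd]
      exact (hbound d).2

end Stmt19Aux

theorem stmt19 {α : Type*} [Fintype α] [DecidableEq α] (hα : 1 < Fintype.card α)
    {n : ℕ} (B : Set (Fin n → α)) (hB : IsGuaranteed 1 1 B) :
    (∀ s t : Fin n → α, editDist s t = 3 →
      ∃ v ∈ B, editDist s v ≤ 2 ∧ editDist t v ≤ 2) ∧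
    ((∀ s t : Fin n → α, editDist s t ≤ 3 →
        ({v ∈ B | editDist s v ≤ 2} ∩ {v ∈ B | editDist t v ≤ 2}).Nonempty) ∧
     (∀ s t : Fin n → α, 5 ≤ editDist s t →
        {v ∈ B | editDist s v ≤ 2} ∩ {v ∈ B | editDist t v ≤ 2} = ∅)) := by
  refine ⟨fun s t h3 => Stmt19Aux.key hα B hB s t (by omega), fun s t h3 => ?_, fun s t h5 => ?_⟩
  · obtain ⟨v, hvB, h1, h2⟩ := Stmt19Aux.key hα B hB s t h3
    exact ⟨v, ⟨hvB, h1⟩, ⟨hvB, h2⟩⟩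
  · apply Set.eq_empty_iff_forall_notMem.mpr
    rintro v ⟨⟨-, h1⟩, ⟨-, h2⟩⟩
    have ht : editDist s t ≤ editDist s v + editDist t v := by
      show Stmt19Aux.lev (List.ofFn s) (List.ofFn t) ≤
        Stmt19Aux.lev (List.ofFn s) (List.ofFn v) + Stmt19Aux.lev (List.ofFn t) (List.ofFn v)
      have h4 := Stmt19Aux.lev_triangle (List.ofFn s) (List.ofFn v) (List.ofFn t)
      have h5 := Stmt19Aux.lev_symm (List.ofFn v) (List.ofFn t)
      omega
    omega
end
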